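/- Let A ∈ ℂ^{n×N}, let x0, x ∈ ℂ^n satisfy Re(x0^* x) > 0, and let γ = (1−t) x0 + t x for some t ∈ [0,1] (a convex combination, necessarily nonzero). Define λ2(γ) = sup{ ‖Im(B_γ^* u)‖ : u ∈ ℂ^n, Re(γ^* u) = 0, ‖u‖ = 1 }. Then ‖Im(B_γ^* (x − x0))‖ ≤ λ2(γ) · ‖x − x0‖. -/

import Mathlib

set_option maxHeartbeats 1000000

/-- `phase z = z/|z|`, with the convention `phase 0 = 1`. -/
noncomputable def phase (z : ℂ) : ℂ := if z = 0 then 1 else z / ((‖z‖ : ℝ) : ℂ)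

lemma abs_phase (z : ℂ) : ‖phase z‖ = 1 := by
  unfold phase
  split_ifs with h
  · simp
  · rw [norm_div]
    simp [div_self (norm_ne_zero_iff.mpr h)]

lemma phase_conj_mul_im (z : ℂ) : ((starRingEnd ℂ) (phase z) * z).im = 0 := by
  unfold phase
  split_ifs with h
  · simp [h]
  · have : (starRingEnd ℂ) (z / ((‖z‖ : ℝ) : ℂ)) * z
      = ((Complex.normSq z : ℂ)) / (‖z‖ : ℝ) := by
      rw [map_div₀, Complex.conj_ofReal]
      rw [div_mul_eq_mul_div, Complex.normSq_eq_conj_mul_self]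
    rw [this, Complex.div_ofReal_im]
    simp

private lemma real_smul_eq' {n : ℕ} (r : ℝ) (y : EuclideanSpace ℂ (Fin n)) :
    r • y = (r : ℂ) • y := by
  rw [← algebraMap_smul ℂ r y]; norm_num

theorem second_singular_value_bound {n N : ℕ} (a : Fin N → EuclideanSpace ℂ (Fin n))
    (x0 x : EuclideanSpace ℂ (Fin n))
    (hpos : 0 < (inner ℂ x0 x : ℂ).re)
    (t : ℝ) (ht0 : 0 ≤ t) (ht1 : t ≤ 1)
    (γ : EuclideanSpace ℂ (Fin n)) (hγ : γ = (1 - t) • x0 + t • x)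
    (Bstar : EuclideanSpace ℂ (Fin n) → EuclideanSpace ℂ (Fin n) → Fin N → ℂ)
    (hB : ∀ y ζ j, Bstar y ζ j =
      (starRingEnd ℂ) (phase (inner ℂ (a j) y : ℂ)) * (inner ℂ (a j) ζ : ℂ))
    (lam : ℝ)
    (hlam : lam = sSup {r : ℝ | ∃ u : EuclideanSpace ℂ (Fin n),
      (inner ℂ γ u : ℂ).re = 0 ∧ ‖u‖ = 1 ∧
      r = Real.sqrt (∑ j, ((Bstar γ u j).im) ^ 2)}) :
    Real.sqrt (∑ j, ((Bstar γ (x - x0) j).im) ^ 2) ≤ lam * ‖x - x0‖ := by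
  classical
  have hx0 : x0 ≠ 0 := by
    intro h; rw [h] at hpos; simp at hpos
  have hx0x0 : (inner ℂ x0 x0 : ℂ).re = ‖x0‖ ^ 2 := by
    rw [inner_self_eq_norm_sq_to_K]; norm_cast
  -- γ ≠ 0
  have hγne : γ ≠ 0 := by
    intro h
    have h1 : (inner ℂ x0 γ : ℂ).re = 0 := by rw [h]; simp
    rw [hγ, real_smul_eq', real_smul_eq'] at h1
    rw [inner_add_right, inner_smul_right, inner_smul_right] at h1
    simp only [Complex.add_re, Complex.mul_re, Complex.ofReal_re, Complex.ofReal_im,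
      zero_mul, sub_zero, hx0x0] at h1
    have hx0' : (0:ℝ) < ‖x0‖ ^ 2 := by
      have := norm_pos_iff.mpr hx0
      positivity
    rcases eq_or_lt_of_le ht0 with h0 | h0
    · rw [← h0] at h1; simp at h1
      exact hx0 h1
    · nlinarith [mul_nonneg (sub_nonneg.mpr ht1) (le_of_lt hx0')]
  have hγn : 0 < ‖γ‖ := norm_pos_iff.mpr hγne
  have hγγ : (inner ℂ γ γ : ℂ).re = ‖γ‖ ^ 2 := by
    rw [inner_self_eq_norm_sq_to_K]; norm_cast
  set d : EuclideanSpace ℂ (Fin n) := x - x0 with hd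
  set α : ℝ := (inner ℂ γ d : ℂ).re / ‖γ‖ ^ 2 with hα
  set u : EuclideanSpace ℂ (Fin n) := d - α • γ with hu
  have hdu : d = α • γ + u := by rw [hu]; abel
  -- Re ⟪γ, u⟫ = 0
  have hre_u : (inner ℂ γ u : ℂ).re = 0 := by
    rw [hu, inner_sub_right, real_smul_eq', inner_smul_right]
    simp only [Complex.sub_re, Complex.mul_re, Complex.ofReal_re, Complex.ofReal_im,
      zero_mul, sub_zero, hγγ]
    rw [hα]
    field_simp
    ring
  -- ‖u‖ ≤ ‖d‖
  have hun : ‖u‖ ≤ ‖d‖ := by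
    have h2 : ‖d‖ ^ 2 = ‖α • γ‖ ^ 2 + ‖u‖ ^ 2 := by
      rw [hdu, @norm_add_sq ℂ]
      rw [real_smul_eq', inner_smul_left]
      simp only [RCLike.re_to_complex, Complex.conj_ofReal, Complex.mul_re,
        Complex.ofReal_re, Complex.ofReal_im, hre_u]
      ring
    nlinarith [norm_nonneg u, norm_nonneg d, sq_nonneg ‖α • γ‖]
  -- imaginary parts of Bstar γ d and Bstar γ u agree
  have him : ∀ j, (Bstar γ d j).im = (Bstar γ u j).im := by
    intro j
    have e1 : Bstar γ d j
        = (α:ℂ) * ((starRingEnd ℂ) (phase (inner ℂ (a j) γ)) * (inner ℂ (a j) γ : ℂ))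
          + Bstar γ u j := by
      rw [hB, hB, hdu, inner_add_right, real_smul_eq', inner_smul_right]; ring
    rw [e1, Complex.add_im, Complex.mul_im, phase_conj_mul_im]
    simp
  set S : Set ℝ := {r : ℝ | ∃ u : EuclideanSpace ℂ (Fin n),
      (inner ℂ γ u : ℂ).re = 0 ∧ ‖u‖ = 1 ∧
      r = Real.sqrt (∑ j, ((Bstar γ u j).im) ^ 2)} with hS
  -- bounded above
  have hbdd : BddAbove S := by
    refine ⟨Real.sqrt (∑ j, ‖a j‖ ^ 2), ?_⟩
    rintro r ⟨w, _, hw1, rfl⟩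
    apply Real.sqrt_le_sqrt
    apply Finset.sum_le_sum
    intro j _
    have h1 : ‖Bstar γ w j‖ = ‖(inner ℂ (a j) w : ℂ)‖ := by
      rw [hB, norm_mul, Complex.norm_conj, abs_phase, one_mul]
    have h2 : ‖(inner ℂ (a j) w : ℂ)‖ ≤ ‖a j‖ := by
      have := norm_inner_le_norm (𝕜 := ℂ) (a j) w
      rwa [hw1, mul_one] at this
    have h3 : (Bstar γ w j).im ^ 2 ≤ ‖Bstar γ w j‖ ^ 2 := by
      rw [Complex.sq_norm, Complex.normSq_apply]; nlinarith [sq_nonneg (Bstar γ w j).re]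
    calc (Bstar γ w j).im ^ 2 ≤ ‖Bstar γ w j‖ ^ 2 := h3
      _ = ‖(inner ℂ (a j) w : ℂ)‖ ^ 2 := by rw [h1]
      _ ≤ ‖a j‖ ^ 2 := by nlinarith [norm_nonneg (inner ℂ (a j) w : ℂ)]
  -- nonempty
  have hne : S.Nonempty := by
    refine ⟨_, ((‖γ‖⁻¹ : ℂ) * Complex.I) • γ, ?_, ?_, rfl⟩
    · rw [inner_smul_right, Complex.mul_re, Complex.mul_re, Complex.mul_im,
        Complex.I_re, Complex.I_im]
      simp only [Complex.ofReal_re, Complex.ofReal_im, mul_zero, mul_one, zero_sub,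
        zero_mul, add_zero, zero_add]
      have hγγim : (inner ℂ γ γ : ℂ).im = 0 := by
        rw [inner_self_eq_norm_sq_to_K]; norm_cast
      rw [hγγim]
      simp [← Complex.ofReal_inv]
    · rw [norm_smul]
      simp only [norm_mul, Complex.norm_I, mul_one]
      rw [norm_inv]
      simp only [Complex.norm_real, Real.norm_eq_abs, abs_of_pos hγn]
      field_simp
  -- lam ≥ 0
  have hlam0 : 0 ≤ lam := by
    obtain ⟨r, w, hw0, hw1, hrw⟩ := hne
    have h1 : r ≤ lam := hlam ▸ le_csSup hbdd ⟨w, hw0, hw1, hrw⟩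
    have h2 : 0 ≤ r := by rw [hrw]; exact Real.sqrt_nonneg _
    linarith
  by_cases hu0 : u = 0
  · have hz : ∀ j, (Bstar γ d j).im = 0 := by
      intro j; rw [him j, hu0, hB]; simp
    rw [show (∑ j, ((Bstar γ (x - x0) j).im) ^ 2) = 0 by
      apply Finset.sum_eq_zero; intro j _; rw [← hd, hz j]; ring]
    rw [Real.sqrt_zero]
    exact mul_nonneg hlam0 (norm_nonneg _)
  · have hun0 : 0 < ‖u‖ := norm_pos_iff.mpr hu0
    set v : EuclideanSpace ℂ (Fin n) := (‖u‖⁻¹ : ℝ) • u with hv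
    have hvinner : (inner ℂ γ v : ℂ).re = 0 := by
      rw [hv, real_smul_eq', inner_smul_right, Complex.mul_re, Complex.ofReal_re,
        Complex.ofReal_im, hre_u]
      ring
    have hvnorm : ‖v‖ = 1 := by
      rw [hv, norm_smul, Real.norm_eq_abs, abs_of_pos (inv_pos.mpr hun0),
        inv_mul_cancel₀ (ne_of_gt hun0)]
    have hscale : ∀ j, (Bstar γ u j).im = ‖u‖ * (Bstar γ v j).im := by
      intro j
      have e1 : Bstar γ v j = ((‖u‖⁻¹ : ℝ) : ℂ) * Bstar γ u j := by
        rw [hB, hB, hv, real_smul_eq', inner_smul_right]; ring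
      rw [e1, Complex.mul_im, Complex.ofReal_re, Complex.ofReal_im]
      field_simp
      ring
    set r : ℝ := Real.sqrt (∑ j, ((Bstar γ v j).im) ^ 2) with hr
    have hrS : r ∈ S := ⟨v, hvinner, hvnorm, rfl⟩
    have hrlam : r ≤ lam := hlam ▸ le_csSup hbdd hrS
    have hrnn : 0 ≤ r := Real.sqrt_nonneg _
    have hLHS : Real.sqrt (∑ j, ((Bstar γ (x - x0) j).im) ^ 2) = ‖u‖ * r := by
      have hsum : (∑ j, ((Bstar γ (x - x0) j).im) ^ 2)
          = ‖u‖ ^ 2 * ∑ j, ((Bstar γ v j).im) ^ 2 := by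
        rw [Finset.mul_sum]
        apply Finset.sum_congr rfl
        intro j _
        rw [← hd, him j, hscale j]; ring
      rw [hsum, Real.sqrt_mul (by positivity), Real.sqrt_sq (norm_nonneg u)]
    rw [hLHS]
    calc ‖u‖ * r ≤ ‖d‖ * lam := mul_le_mul hun hrlam hrnn (norm_nonneg d)
      _ = lam * ‖d‖ := mul_comm _ _
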